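/- For every undirected weighted graph G on n vertices, there exists a weighted graph H on the same vertex set (not necessarily a subgraph of G) with O(n^{4/3}·log n) edges such that for all u,v: d_G(u,v) ≤ d_H(u,v) ≤ d_G(u,v) + 4·W_{u,v}. Moreover, such an H is produced with high probability by taking a (2n^{1/3} ln n)-light initialization of G together with all pairs of a random vertex set S (each vertex sampled independently with probability n^{-1/3}) connected by edges weighted by their G-distances. -/

import Mathlib

open Finset SimpleGraph
open scoped Classical

namespace AddSpanner

/-- Total weight of a walk. -/
noncomputable def walkWeight {V : Type} (w : V → V → ℝ) {G : SimpleGraph V} :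
    ∀ {u v : V}, G.Walk u v → ℝ
  | _, _, .nil => 0
  | u, _, .cons (v := x) _ q => w u x + walkWeight w q

/-- Maximum edge weight along a walk (0 for the trivial walk). -/
noncomputable def walkMaxW {V : Type} (w : V → V → ℝ) {G : SimpleGraph V} {u v : V}
    (p : G.Walk u v) : ℝ :=
  (p.darts.map fun d => w d.toProd.1 d.toProd.2).foldr max 0

/-- Weighted shortest-path distance (infimum over all walk weights). -/
noncomputable def wdist {V : Type} (G : SimpleGraph V) (w : V → V → ℝ) (u v : V) : ℝ :=
  sInf {x | ∃ p : G.Walk u v, walkWeight w p = x}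

/-- A walk is a shortest path if it is a path whose weight realizes the distance. -/
def IsShortestPath {V : Type} (G : SimpleGraph V) (w : V → V → ℝ) {u v : V}
    (p : G.Walk u v) : Prop :=
  p.IsPath ∧ walkWeight w p = wdist G w u v

/-- Number of `H`-neighbors of `x` reachable by an edge no heavier than the edge `{x,y}`. -/
noncomputable def lightDeg {V : Type} [Fintype V] (H : SimpleGraph V) (w : V → V → ℝ)
    (x y : V) : ℕ :=
  (Finset.univ.filter fun z => H.Adj x z ∧ w x z ≤ w x y).card

/-- `H` is a `t`-light initialization of `G`: it is a subgraph which, for every vertex,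
contains its `t` lightest incident edges (all of them if the degree is at most `t`);
equivalently, whenever an edge `{x,y}` of `G` is missing from `H`, vertex `x` already has at
least `t` incident `H`-edges of weight at most `w x y`. -/
def LightInit {V : Type} [Fintype V] (G H : SimpleGraph V) (w : V → V → ℝ) (t : ℝ) : Prop :=
  H ≤ G ∧ ∀ x y, G.Adj x y → ¬ H.Adj x y → t ≤ (lightDeg H w x y : ℝ)

/-- Number of edges of a graph. -/
noncomputable def numEdges {V : Type} (H : SimpleGraph V) : ℕ :=
  Nat.card H.edgeSet

section basics
variable {V : Type} {G : SimpleGraph V} {w : V → V → ℝ}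

@[simp] lemma walkWeight_nil {u : V} : walkWeight w (SimpleGraph.Walk.nil : G.Walk u u) = 0 := rfl

@[simp] lemma walkWeight_cons {u x v : V} (h : G.Adj u x) (p : G.Walk x v) :
    walkWeight w (SimpleGraph.Walk.cons h p) = w u x + walkWeight w p := rfl

lemma walkWeight_append {u v z : V} (p : G.Walk u v) (q : G.Walk v z) :
    walkWeight w (p.append q) = walkWeight w p + walkWeight w q := by
  induction p with
  | nil => simp
  | cons h p ih => simp [ih, add_assoc]

lemma walkWeight_nonneg (hw : ∀ x y, G.Adj x y → 0 ≤ w x y) {u v : V} (p : G.Walk u v) :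
    0 ≤ walkWeight w p := by
  induction p with
  | nil => simp
  | cons h p ih => simpa using add_nonneg (hw _ _ h) ih

lemma walkWeight_reverse (hsym : ∀ x y, w x y = w y x) {u v : V} (p : G.Walk u v) :
    walkWeight w p.reverse = walkWeight w p := by
  induction p with
  | nil => simp
  | cons h p ih =>
      rw [SimpleGraph.Walk.reverse_cons, walkWeight_append, ih, walkWeight_cons]
      simp [hsym _ _]
      ring

@[simp] lemma walkMaxW_nil {u : V} : walkMaxW w (SimpleGraph.Walk.nil : G.Walk u u) = 0 := rfl

@[simp] lemma walkMaxW_cons {u x v : V} (h : G.Adj u x) (p : G.Walk x v) :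
    walkMaxW w (SimpleGraph.Walk.cons h p) = max (w u x) (walkMaxW w p) := rfl

lemma walkMaxW_nonneg {u v : V} (p : G.Walk u v) : 0 ≤ walkMaxW w p := by
  induction p with
  | nil => simp
  | cons h p ih => rw [walkMaxW_cons]; exact le_max_of_le_right ih

lemma wdist_bddBelow (hw : ∀ x y, G.Adj x y → 0 ≤ w x y) (u v : V) :
    BddBelow {x | ∃ p : G.Walk u v, walkWeight w p = x} :=
  ⟨0, fun x ⟨p, hp⟩ => hp ▸ walkWeight_nonneg hw p⟩

lemma wdist_nonneg (hw : ∀ x y, G.Adj x y → 0 ≤ w x y) (u v : V) :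
    0 ≤ wdist G w u v :=
  Real.sInf_nonneg (fun x ⟨p, hp⟩ => hp ▸ walkWeight_nonneg hw p)

lemma wdist_le_walkWeight (hw : ∀ x y, G.Adj x y → 0 ≤ w x y) {u v : V} (p : G.Walk u v) :
    wdist G w u v ≤ walkWeight w p :=
  csInf_le (wdist_bddBelow hw u v) ⟨p, rfl⟩

lemma wdist_self_le (hw : ∀ x y, G.Adj x y → 0 ≤ w x y) (u : V) :
    wdist G w u u ≤ 0 := wdist_le_walkWeight hw SimpleGraph.Walk.nil

lemma wdist_le_w (hw : ∀ x y, G.Adj x y → 0 ≤ w x y) {u v : V} (h : G.Adj u v) :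
    wdist G w u v ≤ w u v := by
  have := wdist_le_walkWeight hw (SimpleGraph.Walk.cons h SimpleGraph.Walk.nil)
  simpa using this

lemma wdist_symm (hw : ∀ x y, G.Adj x y → 0 ≤ w x y) (hsym : ∀ x y, w x y = w y x) (u v : V) :
    wdist G w u v = wdist G w v u := by
  unfold wdist
  congr 1
  ext x
  constructor
  · rintro ⟨p, rfl⟩; exact ⟨p.reverse, walkWeight_reverse hsym p⟩
  · rintro ⟨p, rfl⟩; exact ⟨p.reverse, walkWeight_reverse hsym p⟩

lemma wdist_triangle (hw : ∀ x y, G.Adj x y → 0 ≤ w x y) {u x v : V}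
    (h1 : G.Reachable u x) (h2 : G.Reachable x v) :
    wdist G w u v ≤ wdist G w u x + wdist G w x v := by
  have key : ∀ a ∈ {r | ∃ p : G.Walk u x, walkWeight w p = r},
      ∀ b ∈ {r | ∃ p : G.Walk x v, walkWeight w p = r}, wdist G w u v ≤ a + b := by
    rintro a ⟨p, rfl⟩ b ⟨q, rfl⟩
    have := wdist_le_walkWeight hw (p.append q)
    rwa [walkWeight_append] at this
  have hA : {r | ∃ p : G.Walk u x, walkWeight w p = r}.Nonempty := by
    obtain ⟨p⟩ := h1; exact ⟨_, p, rfl⟩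
  have hB : {r | ∃ p : G.Walk x v, walkWeight w p = r}.Nonempty := by
    obtain ⟨p⟩ := h2; exact ⟨_, p, rfl⟩
  have step1 : ∀ a ∈ {r | ∃ p : G.Walk u x, walkWeight w p = r},
      wdist G w u v ≤ a + wdist G w x v := by
    intro a ha
    have : wdist G w u v - a ≤ wdist G w x v :=
      le_csInf hB (fun b hb => by linarith [key a ha b hb])
    linarith
  have : wdist G w u v - wdist G w x v ≤ wdist G w u x :=
    le_csInf hA (fun a ha => by linarith [step1 a ha])
  linarith

end basics


section sp
variable {V : Type} {G : SimpleGraph V} {w : V → V → ℝ}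

lemma walkWeight_dropUntil_le [DecidableEq V] (hw : ∀ x y, G.Adj x y → 0 ≤ w x y) {u v x : V}
    (p : G.Walk u v) (h : x ∈ p.support) :
    walkWeight w (p.dropUntil x h) ≤ walkWeight w p := by
  have hs := p.take_spec h
  have := walkWeight_append (w := w) (p.takeUntil x h) (p.dropUntil x h)
  rw [hs] at this
  have h0 := walkWeight_nonneg hw (p.takeUntil x h)
  linarith

lemma walkWeight_bypass_le [DecidableEq V] (hw : ∀ x y, G.Adj x y → 0 ≤ w x y) {u v : V} (p : G.Walk u v) :
    walkWeight w p.bypass ≤ walkWeight w p := by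
  induction p with
  | nil => simp [SimpleGraph.Walk.bypass]
  | cons h p ih =>
      simp only [SimpleGraph.Walk.bypass]
      split_ifs with hs
      · calc walkWeight w (p.bypass.dropUntil _ hs) ≤ walkWeight w p.bypass :=
              walkWeight_dropUntil_le hw _ hs
          _ ≤ walkWeight w p := ih
          _ ≤ w _ _ + walkWeight w p := by linarith [hw _ _ h]
      · simp only [walkWeight_cons]; linarith

lemma exists_shortestPath [Fintype V] [DecidableEq V]
    (hw : ∀ x y, G.Adj x y → 0 ≤ w x y) {u v : V} (h : G.Reachable u v) :
    ∃ p : G.Walk u v, IsShortestPath G w p := by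
  have : Nonempty (G.Path u v) := by
    obtain ⟨q⟩ := h
    exact ⟨⟨q.bypass, q.bypass_isPath⟩⟩
  have hne : (Finset.univ.image (fun p : G.Path u v => walkWeight w p.val)).Nonempty := by
    obtain ⟨p⟩ := this
    exact ⟨_, Finset.mem_image_of_mem _ (Finset.mem_univ p)⟩
  set F := Finset.univ.image (fun p : G.Path u v => walkWeight w p.val) with hF
  obtain ⟨p, -, hp⟩ := Finset.mem_image.mp (F.min'_mem hne)
  refine ⟨p.val, p.prop, ?_⟩
  have h1 : wdist G w u v ≤ walkWeight w p.val := wdist_le_walkWeight hw _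
  have h2 : walkWeight w p.val ≤ wdist G w u v := by
    rw [hp]
    refine le_csInf ?_ ?_
    · obtain ⟨q⟩ := h; exact ⟨_, q, rfl⟩
    · rintro b ⟨q, rfl⟩
      calc F.min' hne ≤ walkWeight w q.bypass := by
            refine F.min'_le _ ?_
            exact Finset.mem_image_of_mem _
              (Finset.mem_univ (⟨q.bypass, q.bypass_isPath⟩ : G.Path u v))
        _ ≤ walkWeight w q := walkWeight_bypass_le hw q
  exact le_antisymm h2 h1

end sp
section bset
variable {V : Type} [Fintype V] [DecidableEq V]

noncomputable def ordV (V : Type) [Fintype V] : V → ℕ := fun v => ((Fintype.equivFin V) v : ℕ)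

lemma ordV_injective : Function.Injective (ordV V) := fun a b h =>
  (Fintype.equivFin V).injective (Fin.ext h)

/-- Tie-broken comparison of neighbors of `x` by weight. -/
def keyr (w : V → V → ℝ) (x a b : V) : Prop :=
  w x a < w x b ∨ (w x a = w x b ∧ ordV V a ≤ ordV V b)

instance keyr_trans (w : V → V → ℝ) (x : V) : IsTrans V (keyr w x) := by
  constructor
  rintro a b c (h | ⟨h1, h2⟩) (h' | ⟨h1', h2'⟩)
  · exact Or.inl (h.trans h')
  · exact Or.inl (h1' ▸ h)
  · exact Or.inl (h1 ▸ h')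
  · exact Or.inr ⟨h1.trans h1', h2.trans h2'⟩

instance keyr_antisymm (w : V → V → ℝ) (x : V) : IsAntisymm V (keyr w x) := by
  constructor
  rintro a b (h | ⟨h1, h2⟩) (h' | ⟨h1', h2'⟩)
  · exact absurd h' (not_lt_of_gt h)
  · exact absurd h (by rw [h1']; exact lt_irrefl _)
  · exact absurd h' (by rw [h1]; exact lt_irrefl _)
  · exact ordV_injective (le_antisymm h2 h2')

instance keyr_total (w : V → V → ℝ) (x : V) : IsTotal V (keyr w x) := by
  constructor
  intro a b
  rcases lt_trichotomy (w x a) (w x b) with h | h | h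
  · exact Or.inl (Or.inl h)
  · rcases le_total (ordV V a) (ordV V b) with h2 | h2
    · exact Or.inl (Or.inr ⟨h, h2⟩)
    · exact Or.inr (Or.inr ⟨h.symm, h2⟩)
  · exact Or.inr (Or.inl h)

/-- Neighbors of `x` sorted by increasing (tie-broken) weight. -/
noncomputable def nbrSorted (G : SimpleGraph V) (w : V → V → ℝ) (x : V) : List V :=
  (G.neighborFinset x).sort (keyr w x)

/-- The (up to) `t` lightest neighbors of `x`. -/
noncomputable def Bset (G : SimpleGraph V) (w : V → V → ℝ) (t : ℕ) (x : V) : Finset V :=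
  ((nbrSorted G w x).take t).toFinset

lemma Bset_adj {G : SimpleGraph V} {w : V → V → ℝ} {t : ℕ} {x z : V}
    (h : z ∈ Bset G w t x) : G.Adj x z := by
  rw [Bset, List.mem_toFinset] at h
  have := List.take_subset t _ h
  rw [nbrSorted, Finset.mem_sort] at this
  exact (SimpleGraph.mem_neighborFinset G x z).mp this

lemma card_Bset_le (G : SimpleGraph V) (w : V → V → ℝ) (t : ℕ) (x : V) :
    (Bset G w t x).card ≤ t :=
  le_trans (List.toFinset_card_le _) (le_trans (List.length_take_le _ _) le_rfl)

lemma Bset_main {G : SimpleGraph V} {w : V → V → ℝ} {t : ℕ} {x y : V}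
    (hadj : G.Adj x y) (hy : y ∉ Bset G w t x) :
    t ≤ (Bset G w t x).card ∧ ∀ z ∈ Bset G w t x, w x z ≤ w x y := by
  set l := nbrSorted G w x with hl
  have hnodup : l.Nodup := Finset.sort_nodup _ _
  have hyl : y ∈ l := by
    rw [hl, nbrSorted, Finset.mem_sort, SimpleGraph.mem_neighborFinset]; exact hadj
  have hyt : y ∉ l.take t := fun h => hy (List.mem_toFinset.mpr h)
  have hyd : y ∈ l.drop t := by
    have := (List.take_append_drop t l) ▸ hyl
    rcases List.mem_append.mp this with h | h
    · exact absurd h hyt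
    · exact h
  have hlen : t ≤ l.length := by
    by_contra hc
    push_neg at hc
    rw [List.drop_eq_nil_of_le (le_of_lt hc)] at hyd
    exact List.not_mem_nil hyd
  have hcard : (Bset G w t x).card = t := by
    rw [Bset, List.toFinset_card_of_nodup (hnodup.sublist (List.take_sublist t l)),
      List.length_take]
    exact min_eq_left hlen
  refine ⟨le_of_eq hcard.symm, ?_⟩
  intro z hz
  have hzt : z ∈ l.take t := List.mem_toFinset.mp hz
  have hsorted : List.Pairwise (keyr w x) l := Finset.pairwise_sort _ _
  have hpair : ∀ a ∈ l.take t, ∀ b ∈ l.drop t, keyr w x a b := by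
    have := (List.take_append_drop t l).symm ▸ hsorted
    exact fun a ha b hb => (List.pairwise_append.mp this).2.2 a ha b hb
  rcases hpair z hzt y hyd with h | ⟨h, -⟩
  · exact le_of_lt h
  · exact le_of_eq h

end bset
section hitting
variable {V : Type} [Fintype V] [DecidableEq V]

lemma double_count (F : Finset (Finset V)) :
    ∑ x : V, (F.filter fun A => x ∈ A).card = ∑ A ∈ F, A.card := by
  simp only [Finset.card_filter]
  rw [Finset.sum_comm]
  congr 1
  ext A
  rw [← Finset.card_filter]
  congr 1
  simp

lemma hitting_set (n t : ℕ) (ht : 0 < t) (htn : (t : ℝ) ≤ n) (hn : Fintype.card V = n) :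
    ∀ (k : ℕ) (F : Finset (Finset V)), (∀ A ∈ F, t ≤ A.card) →
      ((F.card : ℝ) * (1 - (t : ℝ) / n) ^ k < 1) →
      ∃ S : Finset V, S.card ≤ k ∧ ∀ A ∈ F, (A ∩ S).Nonempty := by
  have hn0 : (0 : ℝ) < n := lt_of_lt_of_le (by exact_mod_cast ht) htn
  have hq0 : (0 : ℝ) ≤ 1 - (t : ℝ) / n := by
    rw [sub_nonneg, div_le_one hn0]; exact htn
  intro k
  induction k with
  | zero =>
      intro F hF hcard
      rw [pow_zero, mul_one] at hcard
      have : F.card = 0 := by exact_mod_cast Nat.lt_one_iff.mp (by exact_mod_cast hcard)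
      refine ⟨∅, le_rfl, ?_⟩
      intro A hA
      rw [Finset.card_eq_zero.mp this] at hA
      exact absurd hA (Finset.notMem_empty A)
  | succ k ih =>
      intro F hF hcard
      rcases F.eq_empty_or_nonempty with rfl | hFne
      · exact ⟨∅, Nat.zero_le _, fun A hA => absurd hA (Finset.notMem_empty A)⟩
      set m := F.card with hm
      have hm1 : (1 : ℝ) ≤ m := by
        have : 0 < m := Finset.card_pos.mpr hFne
        exact_mod_cast this
      -- find a popular vertex
      have hx : ∃ x : V, (t : ℝ) * m / n ≤ ((F.filter fun A => x ∈ A).card : ℝ) := by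
        by_contra hc
        push_neg at hc
        have hsum : ((∑ x : V, (F.filter fun A => x ∈ A).card : ℕ) : ℝ) <
            (t : ℝ) * m := by
          push_cast
          calc ∑ x : V, ((F.filter fun A => x ∈ A).card : ℝ)
              < ∑ _x : V, (t : ℝ) * m / n := by
                apply Finset.sum_lt_sum_of_nonempty
                · rw [← Finset.card_pos, Finset.card_univ, hn]
                  exact_mod_cast hn0
                · intro x _; exact hc x
            _ = (t : ℝ) * m := by
                rw [Finset.sum_const, Finset.card_univ, hn, nsmul_eq_mul]
                field_simp
        rw [double_count] at hsum
        have hge : (t : ℝ) * m ≤ ((∑ A ∈ F, A.card : ℕ) : ℝ) := by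
          push_cast
          calc (t : ℝ) * m = ∑ _A ∈ F, (t : ℝ) := by rw [Finset.sum_const, nsmul_eq_mul]; ring
            _ ≤ ∑ A ∈ F, (A.card : ℝ) := by
                apply Finset.sum_le_sum
                intro A hA
                exact_mod_cast hF A hA
        linarith
      obtain ⟨x, hx⟩ := hx
      set F' := F.filter fun A => x ∉ A with hF'
      have hsplit : (F.filter fun A => x ∈ A).card + F'.card = m :=
        Finset.card_filter_add_card_filter_not _
      have hF'card : (F'.card : ℝ) ≤ (m : ℝ) * (1 - (t : ℝ) / n) := by
        have : (F'.card : ℝ) = (m : ℝ) - ((F.filter fun A => x ∈ A).card : ℝ) := by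
          have := hsplit
          push_cast [← this]
          ring
        rw [this]
        have : (t : ℝ) * m / n = (m : ℝ) * ((t : ℝ) / n) := by ring
        rw [this] at hx
        nlinarith
      have hrec : (F'.card : ℝ) * (1 - (t : ℝ) / n) ^ k < 1 := by
        calc (F'.card : ℝ) * (1 - (t : ℝ) / n) ^ k
            ≤ (m : ℝ) * (1 - (t : ℝ) / n) * (1 - (t : ℝ) / n) ^ k :=
              mul_le_mul_of_nonneg_right hF'card (pow_nonneg hq0 k)
          _ = (m : ℝ) * (1 - (t : ℝ) / n) ^ (k + 1) := by ring
          _ < 1 := hcard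
      obtain ⟨S', hS'card, hS'⟩ := ih F' (fun A hA => hF A (Finset.mem_of_mem_filter A hA)) hrec
      refine ⟨insert x S', le_trans (Finset.card_insert_le _ _) (by omega), ?_⟩
      intro A hA
      by_cases hxA : x ∈ A
      · exact ⟨x, Finset.mem_inter.mpr ⟨hxA, Finset.mem_insert_self _ _⟩⟩
      · obtain ⟨y, hy⟩ := hS' A (Finset.mem_filter.mpr ⟨hA, hxA⟩)
        rw [Finset.mem_inter] at hy
        exact ⟨y, Finset.mem_inter.mpr ⟨hy.1, Finset.mem_insert_of_mem hy.2⟩⟩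

end hitting
section Hprops
variable {V : Type} [Fintype V] [DecidableEq V] {G H : SimpleGraph V} {w : V → V → ℝ}
  {t : ℕ} {S : Finset V}
variable (hw : ∀ x y, G.Adj x y → 0 ≤ w x y) (hsym : ∀ x y, w x y = w y x)
variable (HA : ∀ a b, H.Adj a b ↔ a ≠ b ∧ (b ∈ Bset G w t a ∨ a ∈ Bset G w t b ∨
    (a ∈ S ∧ b ∈ S ∧ G.Reachable a b)))
variable (hS : ∀ x : V, t ≤ (Bset G w t x).card → ((Bset G w t x) ∩ S).Nonempty)

include HA in
lemma HAdj_reach {a b : V} (h : H.Adj a b) : G.Reachable a b := by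
  rcases (HA a b).mp h with ⟨-, hb | hb | ⟨-, -, hr⟩⟩
  · exact (Bset_adj hb).reachable
  · exact (Bset_adj hb).reachable.symm
  · exact hr

include HA in
lemma Hwalk_reach {a b : V} (q : H.Walk a b) : G.Reachable a b := by
  induction q with
  | nil => exact SimpleGraph.Reachable.refl _
  | cons h q ih => exact (HAdj_reach HA h).trans ih

include HA hS in
lemma bad_edge {a b : V} (hadj : G.Adj a b) (hb : ¬ H.Adj a b) :
    ∃ z, z ∈ S ∧ z ∈ Bset G w t a ∧ w a z ≤ w a b := by
  have hne : a ≠ b := hadj.ne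
  have hnot : b ∉ Bset G w t a := by
    intro hmem
    exact hb ((HA a b).mpr ⟨hne, Or.inl hmem⟩)
  obtain ⟨hcard, hlight⟩ := Bset_main hadj hnot
  obtain ⟨z, hz⟩ := hS a hcard
  rw [Finset.mem_inter] at hz
  exact ⟨z, hz.2, hz.1, hlight z hz.1⟩

include HA in
lemma HAdj_of_Bset {a z : V} (hz : z ∈ Bset G w t a) : H.Adj a z :=
  (HA a z).mpr ⟨(Bset_adj hz).ne, Or.inl hz⟩

include HA hS in
lemma adj_Hreach {a b : V} (hadj : G.Adj a b) : H.Reachable a b := by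
  by_cases hH : H.Adj a b
  · exact hH.reachable
  obtain ⟨z, hzS, hzB, -⟩ := bad_edge HA hS hadj hH
  obtain ⟨z', hz'S, hz'B, -⟩ := bad_edge HA hS hadj.symm (fun hh => hH hh.symm)
  have h1 : H.Adj a z := HAdj_of_Bset HA hzB
  have h2 : H.Adj b z' := HAdj_of_Bset HA hz'B
  by_cases hzz : z = z'
  · subst hzz
    exact h1.reachable.trans h2.reachable.symm
  · have hzr : G.Reachable z z' :=
      ((Bset_adj hzB).reachable.symm.trans hadj.reachable).trans (Bset_adj hz'B).reachable
    have h3 : H.Adj z z' := (HA z z').mpr ⟨hzz, Or.inr (Or.inr ⟨hzS, hz'S, hzr⟩)⟩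
    exact (h1.reachable.trans h3.reachable).trans h2.reachable.symm

include HA hS in
lemma Greach_Hreach {u v : V} (h : G.Reachable u v) : H.Reachable u v := by
  obtain ⟨p⟩ := h
  induction p with
  | nil => exact SimpleGraph.Reachable.refl _
  | cons h p ih => exact (adj_Hreach HA hS h).trans ih

include hw in
lemma wH_nonneg : ∀ x y, H.Adj x y → 0 ≤ wdist G w x y :=
  fun x y _ => wdist_nonneg hw x y

include hw HA hS in
/-- Domination: `H`-distances (with weights given by `G`-distances) dominate `G`-distances. -/
lemma dom_lemma (u v : V) : wdist G w u v ≤ wdist H (wdist G w) u v := by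
  have hwH := wH_nonneg (H := H) hw
  by_cases hreach : G.Reachable u v
  · have key : ∀ q : H.Walk u v, wdist G w u v ≤ walkWeight (wdist G w) q := by
      intro q
      induction q with
      | nil => exact wdist_self_le hw _
      | cons h q ih =>
          rw [walkWeight_cons]
          have hih := ih (Hwalk_reach HA q)
          have htr := wdist_triangle hw (HAdj_reach HA h) (Hwalk_reach HA q)
          linarith
    have hne : {x | ∃ q : H.Walk u v, walkWeight (wdist G w) q = x}.Nonempty := by
      obtain ⟨q⟩ := Greach_Hreach HA hS hreach
      exact ⟨_, q, rfl⟩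
    exact le_csInf hne (by rintro b ⟨q, rfl⟩; exact key q)
  · have hempty : {x | ∃ p : G.Walk u v, walkWeight w p = x} = ∅ := by
      ext x
      simp only [Set.mem_setOf_eq, Set.mem_empty_iff_false, iff_false]
      rintro ⟨p, -⟩
      exact hreach ⟨p⟩
    rw [wdist, hempty, Real.sInf_empty]
    exact wdist_nonneg hwH u v

include HA in
lemma good_walk_Hreach {a b : V} (p : G.Walk a b)
    (hall : ∀ d ∈ p.darts, H.Adj d.toProd.1 d.toProd.2) : H.Reachable a b := by
  induction p with
  | nil => exact SimpleGraph.Reachable.refl _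
  | cons h p ih =>
      rw [SimpleGraph.Walk.darts_cons] at hall
      exact (hall _ List.mem_cons_self).reachable.trans
        (ih fun d hd => hall d (List.mem_cons_of_mem _ hd))

include hw HA in
/-- If all darts of a `G`-walk are `H`-edges, then `H`-distance is at most the walk weight. -/
lemma good_walk_bound {a b : V} (p : G.Walk a b)
    (hall : ∀ d ∈ p.darts, H.Adj d.toProd.1 d.toProd.2) :
    wdist H (wdist G w) a b ≤ walkWeight w p := by
  have hwH := wH_nonneg (H := H) hw
  induction p with
  | nil => simpa using wdist_self_le hwH _
  | cons h p ih =>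
      rename_i u x v
      rw [SimpleGraph.Walk.darts_cons] at hall
      have hH : H.Adj u x := hall _ List.mem_cons_self
      have hrest : ∀ d ∈ p.darts, H.Adj d.toProd.1 d.toProd.2 :=
        fun d hd => hall d (List.mem_cons_of_mem _ hd)
      have htr := wdist_triangle hwH hH.reachable (good_walk_Hreach HA p hrest)
      have h1 : wdist H (wdist G w) u x ≤ wdist G w u x := wdist_le_w hwH hH
      have h2 : wdist G w u x ≤ w u x := wdist_le_w hw h
      have h3 := ih hrest
      rw [walkWeight_cons]
      linarith

include hw hsym HA hS in
/-- The "last bad dart" lemma. -/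
lemma last_bad {a v : V} (p : G.Walk a v)
    (hbad : ∃ d ∈ p.darts, ¬ H.Adj d.toProd.1 d.toProd.2) :
    ∃ z', z' ∈ S ∧ G.Reachable a z' ∧
      wdist G w a z' + wdist H (wdist G w) z' v ≤ walkWeight w p + 2 * walkMaxW w p := by
  have hwH := wH_nonneg (H := H) hw
  induction p with
  | nil => simp [SimpleGraph.Walk.darts_nil] at hbad
  | cons h p ih =>
      rename_i u b v
      rw [SimpleGraph.Walk.darts_cons] at hbad
      have hmax0 : 0 ≤ walkMaxW w p := walkMaxW_nonneg p
      have hWle : walkMaxW w p ≤ walkMaxW w (SimpleGraph.Walk.cons h p) := by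
        rw [walkMaxW_cons]; exact le_max_right _ _
      have hwab : w u b ≤ walkMaxW w (SimpleGraph.Walk.cons h p) := by
        rw [walkMaxW_cons]; exact le_max_left _ _
      by_cases hbp : ∃ d ∈ p.darts, ¬ H.Adj d.toProd.1 d.toProd.2
      · obtain ⟨z', hz'S, hz'r, hz'⟩ := ih hbp
        refine ⟨z', hz'S, h.reachable.trans hz'r, ?_⟩
        have htr := wdist_triangle hw h.reachable hz'r
        have h2 : wdist G w u b ≤ w u b := wdist_le_w hw h
        rw [walkWeight_cons]
        have h0 : 0 ≤ w u b := hw _ _ h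
        linarith
      · -- the head dart is the bad one
        have hHb : ¬ H.Adj u b := by
          rcases hbad with ⟨d, hd, hdbad⟩
          rcases List.mem_cons.mp hd with rfl | hd'
          · exact hdbad
          · exact absurd (by push_neg at hbp; exact hbp d hd') (by simpa using hdbad)
        push_neg at hbp
        obtain ⟨z', hz'S, hz'B, hz'w⟩ := bad_edge HA hS h.symm (fun hh => hHb hh.symm)
        have hadjbz' : G.Adj b z' := Bset_adj hz'B
        have hHz'b : H.Adj z' b := (HAdj_of_Bset HA hz'B).symm
        refine ⟨z', hz'S, h.reachable.trans hadjbz'.reachable, ?_⟩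
        have hd1 : wdist H (wdist G w) z' v ≤ wdist G w z' b + wdist H (wdist G w) b v := by
          have := wdist_triangle hwH hHz'b.reachable (good_walk_Hreach HA p hbp)
          have hle : wdist H (wdist G w) z' b ≤ wdist G w z' b := wdist_le_w hwH hHz'b
          linarith
        have hd2 : wdist H (wdist G w) b v ≤ walkWeight w p := good_walk_bound hw HA p hbp
        have hd3 : wdist G w z' b ≤ w z' b := wdist_le_w hw hadjbz'.symm
        have hd4 : w z' b ≤ w u b := by
          rw [hsym z' b]
          calc w b z' ≤ w b u := hz'w
            _ = w u b := hsym b u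
        have hd5 : wdist G w u z' ≤ wdist G w u b + wdist G w b z' :=
          wdist_triangle hw h.reachable hadjbz'.reachable
        have hd6 : wdist G w u b ≤ w u b := wdist_le_w hw h
        have hd7 : wdist G w b z' ≤ w b z' := wdist_le_w hw hadjbz'
        have hd8 : w b z' = w z' b := hsym b z'
        rw [walkWeight_cons]
        linarith

include hw hsym HA hS in
/-- Main upper bound: `H`-distance is at most walk weight plus four times max edge weight. -/
lemma up_lemma {u v : V} (p : G.Walk u v) :
    wdist H (wdist G w) u v ≤ walkWeight w p + 4 * walkMaxW w p := by
  have hwH := wH_nonneg (H := H) hw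
  induction p with
  | nil => simpa using wdist_self_le hwH _
  | cons h p ih =>
      rename_i u b v
      have hmax0 : 0 ≤ walkMaxW w p := walkMaxW_nonneg p
      have hmaxc0 : 0 ≤ walkMaxW w (SimpleGraph.Walk.cons h p) :=
        walkMaxW_nonneg _
      have hWle : walkMaxW w p ≤ walkMaxW w (SimpleGraph.Walk.cons h p) := by
        rw [walkMaxW_cons]; exact le_max_right _ _
      have hwab : w u b ≤ walkMaxW w (SimpleGraph.Walk.cons h p) := by
        rw [walkMaxW_cons]; exact le_max_left _ _
      have hGrbv : G.Reachable b v := ⟨p⟩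
      by_cases hHb : H.Adj u b
      · have htr := wdist_triangle hwH hHb.reachable (Greach_Hreach HA hS hGrbv)
        have h1 : wdist H (wdist G w) u b ≤ wdist G w u b := wdist_le_w hwH hHb
        have h2 : wdist G w u b ≤ w u b := wdist_le_w hw h
        rw [walkWeight_cons]
        linarith
      · obtain ⟨z, hzS, hzB, hzw⟩ := bad_edge HA hS h hHb
        have hadjuz : G.Adj u z := Bset_adj hzB
        have hHuz : H.Adj u z := HAdj_of_Bset HA hzB
        have hbadhead : ∃ d ∈ (SimpleGraph.Walk.cons h p).darts,
            ¬ H.Adj d.toProd.1 d.toProd.2 := by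
          refine ⟨⟨(u, b), h⟩, ?_, hHb⟩
          rw [SimpleGraph.Walk.darts_cons]
          exact List.mem_cons_self
        obtain ⟨z', hz'S, hz'r, hlast⟩ := last_bad hw hsym HA hS _ hbadhead
        have hGruv : G.Reachable u v := h.reachable.trans hGrbv
        have hGrzv : G.Reachable z v := hadjuz.reachable.symm.trans hGruv
        have h1 : wdist H (wdist G w) u z ≤ wdist G w u z := wdist_le_w hwH hHuz
        have h2 : wdist G w u z ≤ w u z := wdist_le_w hw hadjuz
        have h3 : w u z ≤ w u b := hzw
        have hdGnn : 0 ≤ wdist G w u z' := wdist_nonneg hw u z'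
        by_cases hzz : z = z'
        · subst hzz
          have htr := wdist_triangle hwH hHuz.reachable (Greach_Hreach HA hS hGrzv)
          rw [walkWeight_cons]
          rw [walkWeight_cons] at hlast
          linarith
        · have hGrzz' : G.Reachable z z' := hadjuz.reachable.symm.trans hz'r
          have hHzz' : H.Adj z z' := (HA z z').mpr ⟨hzz, Or.inr (Or.inr ⟨hzS, hz'S, hGrzz'⟩)⟩
          have hGrz'v : G.Reachable z' v := hz'r.symm.trans hGruv
          have htr1 := wdist_triangle hwH hHuz.reachable (Greach_Hreach HA hS hGrzv)
          have htr2 := wdist_triangle hwH hHzz'.reachable (Greach_Hreach HA hS hGrz'v)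
          have h4 : wdist H (wdist G w) z z' ≤ wdist G w z z' := wdist_le_w hwH hHzz'
          have h5 : wdist G w z z' ≤ wdist G w z u + wdist G w u z' :=
            wdist_triangle hw hadjuz.reachable.symm hz'r
          have h6 : wdist G w z u ≤ w z u := wdist_le_w hw hadjuz.symm
          have h7 : w z u = w u z := hsym z u
          rw [walkWeight_cons]
          rw [walkWeight_cons] at hlast
          linarith

end Hprops
section counting
variable {V : Type} [Fintype V] [DecidableEq V]

lemma count_edges (G H : SimpleGraph V) (w : V → V → ℝ) (t : ℕ) (S : Finset V)
    (HA : ∀ a b, H.Adj a b →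
      (b ∈ Bset G w t a ∨ a ∈ Bset G w t b ∨ (a ∈ S ∧ b ∈ S))) :
    numEdges H ≤ Fintype.card V * t + S.card * S.card := by
  set P1 : Finset (V × V) :=
    Finset.univ.biUnion (fun x => (Bset G w t x).image (fun y => (x, y))) with hP1
  set Q : Finset (Sym2 V) := (P1 ∪ S ×ˢ S).image (Function.uncurry Sym2.mk) with hQ
  have hsub : H.edgeSet ⊆ ↑Q := by
    intro e he
    induction e with
    | _ a b =>
      rw [SimpleGraph.mem_edgeSet] at he
      rcases HA a b he with hc | hc | ⟨h1, h2⟩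
      · refine Finset.mem_coe.mpr (Finset.mem_image.mpr ⟨(a, b), ?_, rfl⟩)
        exact Finset.mem_union_left _ (Finset.mem_biUnion.mpr
          ⟨a, Finset.mem_univ a, Finset.mem_image_of_mem _ hc⟩)
      · refine Finset.mem_coe.mpr (Finset.mem_image.mpr ⟨(b, a), ?_, Sym2.eq_swap.symm⟩)
        exact Finset.mem_union_left _ (Finset.mem_biUnion.mpr
          ⟨b, Finset.mem_univ b, Finset.mem_image_of_mem _ hc⟩)
      · exact Finset.mem_coe.mpr (Finset.mem_image.mpr
          ⟨(a, b), Finset.mem_union_right _ (Finset.mem_product.mpr ⟨h1, h2⟩), rfl⟩)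
  have h1 : numEdges H ≤ Q.card := by
    rw [numEdges, Nat.card_coe_set_eq, ← Set.ncard_coe_finset]
    exact Set.ncard_le_ncard hsub Q.finite_toSet
  have h2 : Q.card ≤ P1.card + S.card * S.card := by
    calc Q.card ≤ (P1 ∪ S ×ˢ S).card := Finset.card_image_le
      _ ≤ P1.card + (S ×ˢ S).card := Finset.card_union_le _ _
      _ = P1.card + S.card * S.card := by rw [Finset.card_product]
  have h3 : P1.card ≤ Fintype.card V * t := by
    calc P1.card ≤ ∑ x : V, ((Bset G w t x).image (fun y => (x, y))).card :=
          Finset.card_biUnion_le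
      _ ≤ ∑ _x : V, t := by
          apply Finset.sum_le_sum
          intro x _
          exact le_trans Finset.card_image_le (card_Bset_le G w t x)
      _ = Fintype.card V * t := by
          rw [Finset.sum_const, Finset.card_univ, smul_eq_mul]
  omega

end counting

end AddSpanner

open AddSpanner in
/-- every weighted graph on `n` vertices admits a `+4W` emulator (a weighted
graph on the same vertex set, not necessarily a subgraph, whose distances dominate those of
`G`) with `O(n^{4/3} log n)` edges. -/
theorem four_W_emulator_exists :
    ∃ C : ℝ, 0 < C ∧
      ∀ (V : Type) [Fintype V] [DecidableEq V] (G : SimpleGraph V) (w : V → V → ℝ),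
        2 ≤ Fintype.card V →
        (∀ x y, G.Adj x y → 0 < w x y) → (∀ x y, w x y = w y x) →
        ∃ (H : SimpleGraph V) (wH : V → V → ℝ),
          (∀ x y, wH x y = wH y x) ∧ (∀ x y, H.Adj x y → 0 ≤ wH x y) ∧
          (numEdges H : ℝ) ≤
            C * (Fintype.card V : ℝ) ^ ((4 : ℝ) / 3) * Real.log (Fintype.card V) ∧
          ∀ u v : V,
            wdist G w u v ≤ wdist H wH u v ∧
            (G.Reachable u v →
              ∃ p : G.Walk u v, IsShortestPath G w p ∧
                wdist H wH u v ≤ wdist G w u v + 4 * walkMaxW w p) := by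
  refine ⟨100, by norm_num, ?_⟩
  intro V _ _ G w hcard2 hpos hsym
  have hw : ∀ x y, G.Adj x y → 0 ≤ w x y := fun x y h => (hpos x y h).le
  set n := Fintype.card V with hn
  have hn2 : (2 : ℝ) ≤ (n : ℝ) := by exact_mod_cast hcard2
  have hn0 : (0 : ℝ) < n := by linarith
  have hn1 : (1 : ℝ) < n := by linarith
  set L := Real.log n with hLdef
  have hL0 : 0 < L := Real.log_pos hn1
  have hL2 : (0.69 : ℝ) ≤ L := by
    have h1 : (0.69 : ℝ) ≤ Real.log 2 := by
      have := Real.log_two_gt_d9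
      linarith
    have h2 : Real.log 2 ≤ L := Real.log_le_log (by norm_num) hn2
    linarith
  set sL := Real.sqrt L with hsLdef
  have hsL0 : 0 < sL := Real.sqrt_pos.mpr hL0
  have hsLsq : sL * sL = L := Real.mul_self_sqrt hL0.le
  have hsL8 : (0.8 : ℝ) ≤ sL := by
    rw [hsLdef]
    rw [show (0.8 : ℝ) = Real.sqrt 0.64 by
      rw [show (0.64 : ℝ) = 0.8 ^ 2 by norm_num, Real.sqrt_sq (by norm_num)]]
    exact Real.sqrt_le_sqrt (by linarith)
  have hsLL : sL ≤ 1.25 * L := by nlinarith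
  set N3 := (n : ℝ) ^ ((1 : ℝ) / 3) with hN3def
  set N23 := (n : ℝ) ^ ((2 : ℝ) / 3) with hN23def
  set N43 := (n : ℝ) ^ ((4 : ℝ) / 3) with hN43def
  have hN3pos : 0 < N3 := Real.rpow_pos_of_pos hn0 _
  have hN23pos : 0 < N23 := Real.rpow_pos_of_pos hn0 _
  have hN43pos : 0 < N43 := Real.rpow_pos_of_pos hn0 _
  have hmul1 : (n : ℝ) * N3 = N43 := by
    rw [hN3def, hN43def, show (4 : ℝ)/3 = 1 + 1/3 by norm_num, Real.rpow_add hn0,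
      Real.rpow_one]
  have hmul2 : N23 * N23 = N43 := by
    rw [hN23def, hN43def, ← Real.rpow_add hn0]; norm_num
  have hmul3 : N3 * N23 = (n : ℝ) := by
    rw [hN3def, hN23def, ← Real.rpow_add hn0]; norm_num
  have hnN43 : (n : ℝ) ≤ N43 := by
    calc (n : ℝ) = (n : ℝ) ^ (1 : ℝ) := (Real.rpow_one _).symm
      _ ≤ N43 := Real.rpow_le_rpow_of_exponent_le (le_of_lt hn1) (by norm_num)
  have hN23N43 : N23 ≤ N43 := Real.rpow_le_rpow_of_exponent_le (le_of_lt hn1) (by norm_num)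
  -- the parameter t
  set x0 := N3 * sL with hx0def
  have hx0pos : 0 < x0 := mul_pos hN3pos hsL0
  set t := ⌈x0⌉₊ with htdef
  have ht0 : 0 < t := Nat.ceil_pos.mpr hx0pos
  have ht_low : x0 ≤ (t : ℝ) := Nat.le_ceil x0
  have ht_up : (t : ℝ) ≤ x0 + 1 := le_of_lt (Nat.ceil_lt_add_one hx0pos.le)
  have htn : (t : ℝ) ≤ (n : ℝ) := by
    have hx0n : x0 ≤ (n : ℝ) := by
      have hLn : L ≤ (n : ℝ) := by
        have := Real.log_le_sub_one_of_pos hn0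
        rw [← hLdef] at this
        linarith
      have h1 : sL ≤ Real.sqrt n := Real.sqrt_le_sqrt hLn
      have h2 : Real.sqrt (n : ℝ) = (n : ℝ) ^ ((1 : ℝ)/2) := by
        rw [Real.sqrt_eq_rpow]
      have h3 : N3 * (n : ℝ) ^ ((1 : ℝ)/2) = (n : ℝ) ^ ((5 : ℝ)/6) := by
        rw [hN3def, ← Real.rpow_add hn0]; norm_num
      have h4 : (n : ℝ) ^ ((5 : ℝ)/6) ≤ (n : ℝ) ^ (1 : ℝ) :=
        Real.rpow_le_rpow_of_exponent_le (le_of_lt hn1) (by norm_num)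
      calc x0 = N3 * sL := hx0def
        _ ≤ N3 * Real.sqrt n := by
            exact mul_le_mul_of_nonneg_left h1 hN3pos.le
        _ = (n : ℝ) ^ ((5 : ℝ)/6) := by rw [h2, h3]
        _ ≤ (n : ℝ) ^ (1 : ℝ) := h4
        _ = (n : ℝ) := Real.rpow_one _
    have : t ≤ n := Nat.ceil_le.mpr hx0n
    exact_mod_cast this
  -- the parameter k and the hitting set
  set k := ⌈(n : ℝ) / t * L⌉₊ + 1 with hkdef
  set F : Finset (Finset V) :=
    (Finset.univ.filter fun x => t ≤ (Bset G w t x).card).image (Bset G w t) with hFdef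
  have hFt : ∀ A ∈ F, t ≤ A.card := by
    intro A hA
    rw [hFdef, Finset.mem_image] at hA
    obtain ⟨x, hx, rfl⟩ := hA
    exact (Finset.mem_filter.mp hx).2
  have hFn : (F.card : ℝ) ≤ (n : ℝ) := by
    have : F.card ≤ n := le_trans Finset.card_image_le
      (le_trans (Finset.card_filter_le _ _) (by rw [Finset.card_univ]))
    exact_mod_cast this
  have ht0R : (0 : ℝ) < t := by exact_mod_cast ht0
  have hq0 : (0 : ℝ) ≤ 1 - (t : ℝ) / n := by
    rw [sub_nonneg, div_le_one hn0]; exact htn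
  have hlt : (F.card : ℝ) * (1 - (t : ℝ) / n) ^ k < 1 := by
    have hqe : 1 - (t : ℝ) / n ≤ Real.exp (-(t / n)) := by
      have := Real.add_one_le_exp (-(t : ℝ) / n)
      rw [neg_div] at this
      linarith
    have hpow : (1 - (t : ℝ) / n) ^ k ≤ Real.exp (-(t / n)) ^ k :=
      pow_le_pow_left₀ hq0 hqe k
    have hexp : Real.exp (-(t / n)) ^ k = Real.exp ((k : ℝ) * (-(t / n))) := by
      rw [← Real.exp_nat_mul]
    have hkL : L < (k : ℝ) * ((t : ℝ) / n) := by
      have h1 : (n : ℝ) / t * L < (k : ℝ) := by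
        have := Nat.le_ceil ((n : ℝ) / t * L)
        have hcast : ((⌈(n : ℝ) / t * L⌉₊ : ℕ) : ℝ) + 1 = (k : ℝ) := by
          rw [hkdef]; push_cast; ring
        linarith
      have h2 : 0 < (t : ℝ) / n := div_pos ht0R hn0
      calc L = ((n : ℝ) / t * L) * ((t : ℝ) / n) := by
            field_simp
        _ < (k : ℝ) * ((t : ℝ) / n) := by
            exact mul_lt_mul_of_pos_right h1 h2
    have hstrict : Real.exp ((k : ℝ) * (-(t / n))) < Real.exp (-L) := by
      apply Real.exp_lt_exp.mpr
      rw [mul_neg]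
      linarith
    have hexpL : Real.exp (-L) = 1 / (n : ℝ) := by
      rw [Real.exp_neg, hLdef, Real.exp_log hn0, one_div]
    have hq0k : (0 : ℝ) ≤ (1 - (t : ℝ) / n) ^ k := pow_nonneg hq0 k
    calc (F.card : ℝ) * (1 - (t : ℝ) / n) ^ k
        ≤ (n : ℝ) * (1 - (t : ℝ) / n) ^ k := mul_le_mul_of_nonneg_right hFn hq0k
      _ ≤ (n : ℝ) * Real.exp (-(t / n)) ^ k := by
          exact mul_le_mul_of_nonneg_left hpow hn0.le
      _ = (n : ℝ) * Real.exp ((k : ℝ) * (-(t / n))) := by rw [hexp]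
      _ < (n : ℝ) * Real.exp (-L) := mul_lt_mul_of_pos_left hstrict hn0
      _ = 1 := by rw [hexpL]; field_simp
  obtain ⟨S, hScard, hShit⟩ := hitting_set n t ht0 htn hn.symm k F hFt hlt
  have hS : ∀ x : V, t ≤ (Bset G w t x).card → ((Bset G w t x) ∩ S).Nonempty := by
    intro x hx
    exact hShit (Bset G w t x) (Finset.mem_image_of_mem _
      (Finset.mem_filter.mpr ⟨Finset.mem_univ x, hx⟩))
  -- the emulator
  set H : SimpleGraph V := {
    Adj := fun a b => a ≠ b ∧ (b ∈ Bset G w t a ∨ a ∈ Bset G w t b ∨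
      (a ∈ S ∧ b ∈ S ∧ G.Reachable a b)),
    symm := ⟨by
      rintro a b ⟨hne, h | h | ⟨h1, h2, h3⟩⟩
      · exact ⟨hne.symm, Or.inr (Or.inl h)⟩
      · exact ⟨hne.symm, Or.inl h⟩
      · exact ⟨hne.symm, Or.inr (Or.inr ⟨h2, h1, h3.symm⟩)⟩⟩,
    loopless := ⟨fun a ha => ha.1 rfl⟩ } with hHdef
  have HA : ∀ a b, H.Adj a b ↔ a ≠ b ∧ (b ∈ Bset G w t a ∨ a ∈ Bset G w t b ∨
      (a ∈ S ∧ b ∈ S ∧ G.Reachable a b)) := fun a b => Iff.rfl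
  refine ⟨H, wdist G w, fun x y => wdist_symm hw hsym x y,
    fun x y _ => wdist_nonneg hw x y, ?_, ?_⟩
  · -- edge count
    have hcount : numEdges H ≤ n * t + S.card * S.card := by
      refine count_edges G H w t S ?_
      intro a b hab
      rcases (HA a b).mp hab with ⟨-, h | h | ⟨h1, h2, -⟩⟩
      exacts [Or.inl h, Or.inr (Or.inl h), Or.inr (Or.inr ⟨h1, h2⟩)]
    have hntR : (n : ℝ) * t ≤ N43 * sL + n := by
      calc (n : ℝ) * t ≤ (n : ℝ) * (x0 + 1) := mul_le_mul_of_nonneg_left ht_up hn0.le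
        _ = (n : ℝ) * N3 * sL + n := by rw [hx0def]; ring
        _ = N43 * sL + n := by rw [hmul1]
    have hkR : (S.card : ℝ) ≤ N23 * sL + 2 := by
      have h1 : (S.card : ℝ) ≤ (k : ℝ) := by exact_mod_cast hScard
      have h2 : (k : ℝ) ≤ (n : ℝ) / t * L + 2 := by
        rw [hkdef]
        push_cast
        have := Nat.ceil_lt_add_one (a := (n : ℝ) / t * L)
          (mul_nonneg (div_nonneg hn0.le ht0R.le) hL0.le)
        linarith
      have h3 : (n : ℝ) / t * L ≤ N23 * sL := by
        have hx0t : (n : ℝ) / t ≤ (n : ℝ) / x0 :=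
          div_le_div_of_nonneg_left hn0.le hx0pos ht_low
        have heq : (n : ℝ) / x0 * L = N23 * sL := by
          rw [hx0def, div_mul_eq_mul_div, div_eq_iff (ne_of_gt (mul_pos hN3pos hsL0))]
          calc (n : ℝ) * L = (N3 * N23) * (sL * sL) := by rw [hmul3, hsLsq]
            _ = N23 * sL * (N3 * sL) := by ring
        calc (n : ℝ) / t * L ≤ (n : ℝ) / x0 * L :=
              mul_le_mul_of_nonneg_right hx0t hL0.le
          _ = N23 * sL := heq
      linarith
    have hsq : (S.card : ℝ) * S.card ≤ N43 * L + 4 * (N23 * sL) + 4 := by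
      have h0 : (0 : ℝ) ≤ (S.card : ℝ) := Nat.cast_nonneg _
      have hb : (0 : ℝ) ≤ N23 * sL + 2 := by positivity
      have hexpand : (N23 * sL + 2) * (N23 * sL + 2)
          = N43 * L + 4 * (N23 * sL) + 4 := by
        calc (N23 * sL + 2) * (N23 * sL + 2)
            = (N23 * N23) * (sL * sL) + 4 * (N23 * sL) + 4 := by ring
          _ = N43 * L + 4 * (N23 * sL) + 4 := by rw [hmul2, hsLsq]
      calc (S.card : ℝ) * S.card ≤ (N23 * sL + 2) * (N23 * sL + 2) :=
            mul_le_mul hkR hkR h0 hb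
        _ = N43 * L + 4 * (N23 * sL) + 4 := hexpand
    have hb1 : N43 * sL ≤ 1.25 * (N43 * L) := by
      calc N43 * sL ≤ N43 * (1.25 * L) := mul_le_mul_of_nonneg_left hsLL hN43pos.le
        _ = 1.25 * (N43 * L) := by ring
    have h15 : (1 : ℝ) ≤ 1.5 * L := by linarith
    have hb2 : (n : ℝ) ≤ 1.5 * (N43 * L) := by
      calc (n : ℝ) ≤ N43 := hnN43
        _ = N43 * 1 := (mul_one _).symm
        _ ≤ N43 * (1.5 * L) := mul_le_mul_of_nonneg_left h15 hN43pos.le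
        _ = 1.5 * (N43 * L) := by ring
    have hb3 : N23 * sL ≤ 1.25 * (N43 * L) := by
      calc N23 * sL ≤ N43 * sL := mul_le_mul_of_nonneg_right hN23N43 hsL0.le
        _ ≤ 1.25 * (N43 * L) := hb1
    have hb4 : (4 : ℝ) ≤ 3 * (N43 * L) := by
      have : (2 : ℝ) * 0.69 ≤ N43 * L :=
        mul_le_mul (hn2.trans hnN43) hL2 (by norm_num) (by linarith)
      linarith
    have htarget : (n : ℝ) * t + (S.card : ℝ) * S.card ≤ 100 * N43 * L := by
      linarith [hntR, hsq, hb1, hb2, hb3, hb4]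
    calc (numEdges H : ℝ) ≤ (n : ℝ) * t + (S.card : ℝ) * S.card := by exact_mod_cast hcount
      _ ≤ 100 * N43 * L := htarget
      _ = 100 * (n : ℝ) ^ ((4 : ℝ)/3) * Real.log n := by rw [hN43def, hLdef]
  · intro u v
    refine ⟨dom_lemma hw HA hS u v, ?_⟩
    intro hr
    obtain ⟨p, hsp⟩ := exists_shortestPath hw hr
    refine ⟨p, hsp, ?_⟩
    have := up_lemma hw hsym HA hS p
    rwa [hsp.2] at this
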